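/- Let n ≥ 2 be an integer, γ > 1, θ ≥ 2, 0 ≤ α < n/γ, ε₀ ∈ (0,1) and C₁ > 0. Let Ω ⊆ ℝⁿ be measurable and let F, G : Ω → [0,∞) be measurable functions such that for every ε ∈ (0,ε₀) and every λ > 0, L^n({ζ ∈ Ω : F(ζ) > ε^{α/n − 1/γ} λ and G(ζ) ≤ ε^{θ(1 − 1/γ)} λ}) ≤ C₁ ε L^n({ζ ∈ Ω : F(ζ) > λ}). Then for every 0 < q < nγ/(n − αγ) and every 0 < s < ∞ there exists a constant C₂ > 0, depending only on n, α, γ, θ, ε₀, C₁, q and s, such that if ‖F‖_{L^{q,s}(Ω)} < ∞ then ‖F‖_{L^{q,s}(Ω)} ≤ C₂ ‖G‖_{L^{q,s}(Ω)}. (Good-λ level-set inequalities imply Lorentz norm bounds; this is the derivation of Theorem 1.2 from Theorem 1.1.) -/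

import Mathlib

open MeasureTheory ENNReal

/-- The Lorentz quasinorm
`‖h‖_{L^{q,s}(Ω)} = (q ∫_0^∞ τ^s L^n({ζ ∈ Ω : |h(ζ)| > τ})^{s/q} dτ/τ)^{1/s}`,
valued in `ℝ≥0∞`. -/
noncomputable def lorentzNorm {n : ℕ} (Ω : Set (EuclideanSpace ℝ (Fin n))) (q s : ℝ)
    (h : EuclideanSpace ℝ (Fin n) → ℝ) : ℝ≥0∞ :=
  (ENNReal.ofReal q *
      ∫⁻ τ in Set.Ioi (0 : ℝ),
        ENNReal.ofReal (τ ^ (s - 1)) * volume {ζ ∈ Ω | τ < |h ζ|} ^ (s / q)) ^ (1 / s)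

/-- The Marcinkiewicz (weak Lebesgue) quasinorm
`‖h‖_{L^{q,∞}(Ω)} = sup_{τ>0} τ L^n({ζ ∈ Ω : |h(ζ)| > τ})^{1/q}`, valued in `ℝ≥0∞`. -/
noncomputable def weakLorentzNorm {n : ℕ} (Ω : Set (EuclideanSpace ℝ (Fin n))) (q : ℝ)
    (h : EuclideanSpace ℝ (Fin n) → ℝ) : ℝ≥0∞ :=
  ⨆ (τ : ℝ) (_ : 0 < τ), ENNReal.ofReal τ * volume {ζ ∈ Ω | τ < |h ζ|} ^ (1 / q)

open Set in
lemma aux_scale (g : ℝ → ℝ≥0∞) (hg : Measurable g) {A : ℝ} (hA : 0 < A) :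
    ∫⁻ t in Set.Ioi (0:ℝ), g (A * t) =
      ENNReal.ofReal A⁻¹ * ∫⁻ t in Set.Ioi (0:ℝ), g t := by
  have hmap := Real.map_volume_mul_left (ne_of_gt hA)
  have hind : Measurable ((Set.Ioi (0:ℝ)).indicator g) := hg.indicator measurableSet_Ioi
  have h1 : ∫⁻ t, (Set.Ioi (0:ℝ)).indicator g t ∂(Measure.map (A * ·) volume)
      = ∫⁻ t, (Set.Ioi (0:ℝ)).indicator g (A * t) := by
    exact lintegral_map hind (measurable_const_mul A)
  rw [hmap, lintegral_smul_measure] at h1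
  have h2 : ∀ t : ℝ, (Set.Ioi (0:ℝ)).indicator g (A * t)
      = (Set.Ioi (0:ℝ)).indicator (fun t => g (A * t)) t := by
    intro t
    by_cases ht : t ∈ Set.Ioi (0:ℝ)
    · rw [Set.indicator_of_mem ht, Set.indicator_of_mem (by exact mul_pos hA ht)]
    · rw [Set.indicator_of_notMem ht, Set.indicator_of_notMem]
      simp only [Set.mem_Ioi, not_lt] at ht ⊢
      exact mul_nonpos_of_nonneg_of_nonpos hA.le ht
  simp only [h2] at h1
  rw [← lintegral_indicator measurableSet_Ioi, ← lintegral_indicator measurableSet_Ioi, ← h1,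
    abs_of_pos (inv_pos.2 hA), smul_eq_mul]

lemma aux_scale_pow (g : ℝ → ℝ≥0∞) (hg : Measurable g) {A s : ℝ} (hA : 0 < A) :
    ∫⁻ t in Set.Ioi (0:ℝ), ENNReal.ofReal (t ^ (s-1)) * g (A * t)
      = ENNReal.ofReal (A ^ (-s)) * ∫⁻ t in Set.Ioi (0:ℝ), ENNReal.ofReal (t ^ (s-1)) * g t := by
  have hmeas : Measurable (fun t : ℝ => ENNReal.ofReal (t ^ (s-1)) * g t) :=
    (measurable_id.pow_const (s-1)).ennreal_ofReal.mul hg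
  have h := aux_scale _ hmeas hA
  have h2 : ∫⁻ t in Set.Ioi (0:ℝ), ENNReal.ofReal ((A * t) ^ (s-1)) * g (A * t)
      = ENNReal.ofReal (A ^ (s-1)) * ∫⁻ t in Set.Ioi (0:ℝ), ENNReal.ofReal (t ^ (s-1)) * g (A * t) := by
    have hmeas2 : Measurable (fun t : ℝ => ENNReal.ofReal (t ^ (s-1)) * g (A * t)) :=
      (measurable_id.pow_const (s-1)).ennreal_ofReal.mul (hg.comp (measurable_const_mul A))
    calc ∫⁻ t in Set.Ioi (0:ℝ), ENNReal.ofReal ((A * t) ^ (s-1)) * g (A * t)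
        = ∫⁻ t in Set.Ioi (0:ℝ), ENNReal.ofReal (A ^ (s-1)) *
            (ENNReal.ofReal (t ^ (s-1)) * g (A * t)) := by
          refine setLIntegral_congr_fun measurableSet_Ioi (fun t ht => ?_)
          rw [Real.mul_rpow hA.le (le_of_lt ht),
            ENNReal.ofReal_mul (Real.rpow_nonneg hA.le _), mul_assoc]
      _ = ENNReal.ofReal (A ^ (s-1)) * ∫⁻ t in Set.Ioi (0:ℝ),
            ENNReal.ofReal (t ^ (s-1)) * g (A * t) := lintegral_const_mul _ hmeas2
  rw [h2] at h
  have hcancel : ENNReal.ofReal (A ^ (-(s-1))) * ENNReal.ofReal (A ^ (s-1)) = 1 := by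
    rw [← ENNReal.ofReal_mul (Real.rpow_nonneg hA.le _), ← Real.rpow_add hA]
    simp
  calc ∫⁻ t in Set.Ioi (0:ℝ), ENNReal.ofReal (t ^ (s-1)) * g (A * t)
      = ENNReal.ofReal (A ^ (-(s-1))) * (ENNReal.ofReal (A ^ (s-1)) *
        ∫⁻ t in Set.Ioi (0:ℝ), ENNReal.ofReal (t ^ (s-1)) * g (A * t)) := by
        rw [← mul_assoc, hcancel, one_mul]
    _ = ENNReal.ofReal (A ^ (-(s-1))) * (ENNReal.ofReal A⁻¹ *
        ∫⁻ t in Set.Ioi (0:ℝ), ENNReal.ofReal (t ^ (s-1)) * g t) := by rw [h]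
    _ = ENNReal.ofReal (A ^ (-s)) * ∫⁻ t in Set.Ioi (0:ℝ), ENNReal.ofReal (t ^ (s-1)) * g t := by
        rw [← mul_assoc, ← Real.rpow_neg_one A, ← ENNReal.ofReal_mul (Real.rpow_nonneg hA.le _),
          ← Real.rpow_add hA]
        ring_nf

lemma aux_two_rpow (x y : ℝ≥0∞) {r : ℝ} (hr : 0 ≤ r) :
    (x + y) ^ r ≤ (2:ℝ≥0∞) ^ r * (x ^ r + y ^ r) := by
  have h1 : x + y ≤ 2 * max x y := by
    rw [two_mul]
    exact add_le_add (le_max_left x y) (le_max_right x y)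
  calc (x + y) ^ r ≤ (2 * max x y) ^ r := ENNReal.rpow_le_rpow h1 hr
    _ = (2:ℝ≥0∞) ^ r * (max x y) ^ r := ENNReal.mul_rpow_of_nonneg _ _ hr
    _ ≤ (2:ℝ≥0∞) ^ r * (x ^ r + y ^ r) := by
        gcongr
        rcases max_cases x y with ⟨h, _⟩ | ⟨h, _⟩ <;> rw [h]
        · exact le_add_right le_rfl
        · exact le_add_left le_rfl

/-- Good-λ level-set inequalities imply Lorentz-norm bounds (derivation of Theorem 1.2
from Theorem 1.1 of the paper). -/
theorem goodLambda_to_lorentz (n : ℕ) (hn : 2 ≤ n) (γ θ α ε₀ C₁ : ℝ)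
    (hγ : 1 < γ) (hθ : 2 ≤ θ) (hα0 : 0 ≤ α) (hα : α < n / γ)
    (hε₀ : ε₀ ∈ Set.Ioo (0 : ℝ) 1) (hC₁ : 0 < C₁)
    (Ω : Set (EuclideanSpace ℝ (Fin n))) (hΩ : MeasurableSet Ω)
    (F G : EuclideanSpace ℝ (Fin n) → ℝ) (hF0 : ∀ x, 0 ≤ F x) (hG0 : ∀ x, 0 ≤ G x)
    (hFmeas : Measurable F) (hGmeas : Measurable G)
    (hgood : ∀ ε ∈ Set.Ioo (0 : ℝ) ε₀, ∀ lam : ℝ, 0 < lam →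
      volume {ζ ∈ Ω | ε ^ (α / n - 1 / γ) * lam < F ζ ∧ G ζ ≤ ε ^ (θ * (1 - 1 / γ)) * lam}
        ≤ ENNReal.ofReal (C₁ * ε) * volume {ζ ∈ Ω | lam < F ζ}) :
    ∀ q s : ℝ, 0 < q → q < n * γ / (n - α * γ) → 0 < s →
      ∃ C₂ : ℝ, 0 < C₂ ∧
        (lorentzNorm Ω q s F ≠ ⊤ →
          lorentzNorm Ω q s F ≤ ENNReal.ofReal C₂ * lorentzNorm Ω q s G) := by
  intro q s hq hqlt hs
  have hγ0 : (0:ℝ) < γ := lt_trans one_pos hγ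
  have hn2 : (2:ℝ) ≤ (n:ℝ) := by exact_mod_cast hn
  have hn0 : (0:ℝ) < (n:ℝ) := by linarith
  have hαγ : α * γ < (n:ℝ) := (lt_div_iff₀ hγ0).1 hα
  have hnαγ : (0:ℝ) < (n:ℝ) - α * γ := by linarith
  obtain ⟨e, he_def⟩ : ∃ x : ℝ, x = 1/γ - α/(n:ℝ) := ⟨_, rfl⟩
  have he : 0 < e := by
    have h1 : α/(n:ℝ) < 1/γ := by
      rw [div_lt_div_iff₀ hn0 hγ0]; nlinarith
    rw [he_def]; linarith
  have hqe : e < 1/q := by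
    have heq : e = ((n:ℝ) - α*γ)/((n:ℝ)*γ) := by
      rw [he_def]; field_simp
    rw [heq, div_lt_div_iff₀ (by positivity) hq]
    have := (lt_div_iff₀ hnαγ).1 hqlt
    nlinarith
  obtain ⟨r, hr_def⟩ : ∃ x : ℝ, x = s/q := ⟨_, rfl⟩
  have hr : 0 < r := hr_def ▸ div_pos hs hq
  obtain ⟨p, hp_def⟩ : ∃ x : ℝ, x = r - e*s := ⟨_, rfl⟩
  have hp : 0 < p := by
    have h1 : e*s < (1/q)*s := mul_lt_mul_of_pos_right hqe hs
    have h2 : (1/q)*s = r := by rw [hr_def]; ring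
    rw [hp_def]; linarith
  -- choice of ε
  have h2r : (0:ℝ) < (2:ℝ)^r := Real.rpow_pos_of_pos two_pos r
  have hC1r : (0:ℝ) < C₁^r := Real.rpow_pos_of_pos hC₁ r
  obtain ⟨T, hT_def⟩ : ∃ x : ℝ, x = 1/(2 * (2:ℝ)^r * C₁^r) := ⟨_, rfl⟩
  have hT : 0 < T := by rw [hT_def]; positivity
  obtain ⟨ε, hε_def⟩ : ∃ x : ℝ, x = min (ε₀/2) (min (T^(1/p)) (1/2)) := ⟨_, rfl⟩
  have hε : 0 < ε := by
    have : (0:ℝ) < T^(1/p) := Real.rpow_pos_of_pos hT _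
    rw [hε_def, lt_min_iff, lt_min_iff]
    exact ⟨by linarith [hε₀.1], this, by norm_num⟩
  have hεε₀ : ε < ε₀ := by
    rw [hε_def]
    exact lt_of_le_of_lt (min_le_left _ _) (by linarith [hε₀.1])
  have hεmem : ε ∈ Set.Ioo (0:ℝ) ε₀ := ⟨hε, hεε₀⟩
  have hεT : ε^p ≤ T := by
    have h1 : ε ≤ T^(1/p) := by
      rw [hε_def]; exact le_trans (min_le_right _ _) (min_le_left _ _)
    have h2 : (T^(1/p))^p = T := by
      rw [← Real.rpow_mul hT.le, one_div_mul_cancel hp.ne', Real.rpow_one]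
    calc ε^p ≤ (T^(1/p))^p := Real.rpow_le_rpow hε.le h1 hp.le
      _ = T := h2
  obtain ⟨A, hA_def⟩ : ∃ x : ℝ, x = ε ^ (α / (n:ℝ) - 1 / γ) := ⟨_, rfl⟩
  obtain ⟨B, hB_def⟩ : ∃ x : ℝ, x = ε ^ (θ * (1 - 1/γ)) := ⟨_, rfl⟩
  have hApos : 0 < A := hA_def ▸ Real.rpow_pos_of_pos hε _
  have hBpos : 0 < B := hB_def ▸ Real.rpow_pos_of_pos hε _
  -- distribution functions
  set D : ℝ → ℝ≥0∞ := fun τ => volume {ζ ∈ Ω | τ < F ζ} with hD_def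
  set DG : ℝ → ℝ≥0∞ := fun τ => volume {ζ ∈ Ω | τ < G ζ} with hDG_def
  have hDanti : Antitone D := fun τ₁ τ₂ h =>
    measure_mono (fun ζ hζ => ⟨hζ.1, lt_of_le_of_lt h hζ.2⟩)
  have hDGanti : Antitone DG := fun τ₁ τ₂ h =>
    measure_mono (fun ζ hζ => ⟨hζ.1, lt_of_le_of_lt h hζ.2⟩)
  have hDmeas : Measurable D := hDanti.measurable
  have hDGmeas : Measurable DG := hDGanti.measurable
  have hDr : Measurable (fun t => D t ^ r) := hDmeas.pow measurable_const
  have hDGr : Measurable (fun t => DG t ^ r) := hDGmeas.pow measurable_const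
  set IF : ℝ≥0∞ := ∫⁻ τ in Set.Ioi (0:ℝ), ENNReal.ofReal (τ ^ (s-1)) * D τ ^ r with hIF_def
  set IG : ℝ≥0∞ := ∫⁻ τ in Set.Ioi (0:ℝ), ENNReal.ofReal (τ ^ (s-1)) * DG τ ^ r with hIG_def
  have hLF : lorentzNorm Ω q s F = (ENNReal.ofReal q * IF) ^ (1/s) := by
    have habs : ∀ τ : ℝ, {ζ ∈ Ω | τ < |F ζ|} = {ζ ∈ Ω | τ < F ζ} := fun τ => by
      ext ζ; simp [abs_of_nonneg (hF0 ζ)]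
    simp only [lorentzNorm, habs, hIF_def, hD_def, ← hr_def]
  have hLG : lorentzNorm Ω q s G = (ENNReal.ofReal q * IG) ^ (1/s) := by
    have habs : ∀ τ : ℝ, {ζ ∈ Ω | τ < |G ζ|} = {ζ ∈ Ω | τ < G ζ} := fun τ => by
      ext ζ; simp [abs_of_nonneg (hG0 ζ)]
    simp only [lorentzNorm, habs, hIG_def, hDG_def, ← hr_def]
  -- good lambda pointwise bound
  have key : ∀ lam : ℝ, 0 < lam →
      D (A * lam) ≤ ENNReal.ofReal (C₁ * ε) * D lam + DG (B * lam) := by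
    intro lam hlam
    have hsub : {ζ ∈ Ω | A * lam < F ζ} ⊆
        {ζ ∈ Ω | A * lam < F ζ ∧ G ζ ≤ B * lam} ∪ {ζ ∈ Ω | B * lam < G ζ} := by
      intro ζ hζ
      rcases le_or_gt (G ζ) (B * lam) with h | h
      · exact Or.inl ⟨hζ.1, hζ.2, h⟩
      · exact Or.inr ⟨hζ.1, h⟩
    calc D (A * lam) ≤ volume ({ζ ∈ Ω | A * lam < F ζ ∧ G ζ ≤ B * lam}
          ∪ {ζ ∈ Ω | B * lam < G ζ}) := measure_mono hsub
      _ ≤ volume {ζ ∈ Ω | A * lam < F ζ ∧ G ζ ≤ B * lam}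
          + volume {ζ ∈ Ω | B * lam < G ζ} := measure_union_le _ _
      _ ≤ ENNReal.ofReal (C₁ * ε) * D lam + DG (B * lam) := by
          refine add_le_add ?_ le_rfl
          have := hgood ε hεmem lam hlam
          rw [hA_def, hB_def]
          exact this
  -- scaled integrals
  have hI50 : ∫⁻ t in Set.Ioi (0:ℝ), ENNReal.ofReal (t^(s-1)) * D (A*t) ^ r
      = ENNReal.ofReal (A^(-s)) * IF := aux_scale_pow _ hDr hApos
  have hIG5 : ∫⁻ t in Set.Ioi (0:ℝ), ENNReal.ofReal (t^(s-1)) * DG (B*t) ^ r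
      = ENNReal.ofReal (B^(-s)) * IG := aux_scale_pow _ hDGr hBpos
  set c2 : ℝ≥0∞ := (2:ℝ≥0∞)^r with hc2_def
  set cC : ℝ≥0∞ := ENNReal.ofReal (C₁*ε) ^ r with hcC_def
  have hpt : ∀ t ∈ Set.Ioi (0:ℝ),
      ENNReal.ofReal (t^(s-1)) * D (A*t)^r ≤
      c2 * cC * (ENNReal.ofReal (t^(s-1)) * D t ^ r)
        + c2 * (ENNReal.ofReal (t^(s-1)) * DG (B*t)^r) := by
    intro t ht
    have h1 : D (A*t)^r ≤ c2 * (cC * D t ^ r + DG (B*t)^r) := by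
      calc D (A*t)^r ≤ (ENNReal.ofReal (C₁*ε) * D t + DG (B*t))^r :=
            ENNReal.rpow_le_rpow (key t ht) hr.le
        _ ≤ c2 * ((ENNReal.ofReal (C₁*ε) * D t)^r + DG (B*t)^r) := aux_two_rpow _ _ hr.le
        _ = c2 * (cC * D t ^ r + DG (B*t)^r) := by
            rw [ENNReal.mul_rpow_of_nonneg _ _ hr.le]
    calc ENNReal.ofReal (t^(s-1)) * D (A*t)^r
        ≤ ENNReal.ofReal (t^(s-1)) * (c2 * (cC * D t ^ r + DG (B*t)^r)) :=
          mul_le_mul_right h1 _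
      _ = c2 * cC * (ENNReal.ofReal (t^(s-1)) * D t ^ r)
          + c2 * (ENNReal.ofReal (t^(s-1)) * DG (B*t)^r) := by ring
  have hmeasF : Measurable (fun t : ℝ => ENNReal.ofReal (t^(s-1)) * D t ^ r) :=
    (measurable_id.pow_const (s-1)).ennreal_ofReal.mul hDr
  have hmeasGB : Measurable (fun t : ℝ => ENNReal.ofReal (t^(s-1)) * DG (B*t) ^ r) :=
    (measurable_id.pow_const (s-1)).ennreal_ofReal.mul
      (hDGr.comp (measurable_const_mul B))
  have main : ENNReal.ofReal (A^(-s)) * IF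
      ≤ c2 * cC * IF + c2 * (ENNReal.ofReal (B^(-s)) * IG) := by
    calc ENNReal.ofReal (A^(-s)) * IF
        = ∫⁻ t in Set.Ioi (0:ℝ), ENNReal.ofReal (t^(s-1)) * D (A*t) ^ r := hI50.symm
      _ ≤ ∫⁻ t in Set.Ioi (0:ℝ), (c2 * cC * (ENNReal.ofReal (t^(s-1)) * D t ^ r)
            + c2 * (ENNReal.ofReal (t^(s-1)) * DG (B*t)^r)) :=
          lintegral_mono_ae ((ae_restrict_iff' measurableSet_Ioi).2 (ae_of_all _ hpt))
      _ = (∫⁻ t in Set.Ioi (0:ℝ), c2 * cC * (ENNReal.ofReal (t^(s-1)) * D t ^ r))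
            + ∫⁻ t in Set.Ioi (0:ℝ), c2 * (ENNReal.ofReal (t^(s-1)) * DG (B*t)^r) :=
          lintegral_add_left (hmeasF.const_mul _) _
      _ = c2 * cC * IF + c2 * (ENNReal.ofReal (B^(-s)) * IG) := by
          rw [lintegral_const_mul _ hmeasF, lintegral_const_mul _ hmeasGB, hIG5]
  have hAA : ENNReal.ofReal (A^s) * ENNReal.ofReal (A^(-s)) = 1 := by
    rw [← ENNReal.ofReal_mul (Real.rpow_nonneg hApos.le _), ← Real.rpow_add hApos]
    simp
  have main2 : IF ≤ (ENNReal.ofReal (A^s) * (c2 * cC)) * IF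
      + (ENNReal.ofReal (A^s) * c2 * ENNReal.ofReal (B^(-s))) * IG := by
    calc IF = ENNReal.ofReal (A^s) * (ENNReal.ofReal (A^(-s)) * IF) := by
          rw [← mul_assoc, hAA, one_mul]
      _ ≤ ENNReal.ofReal (A^s) * (c2 * cC * IF + c2 * (ENNReal.ofReal (B^(-s)) * IG)) :=
          mul_le_mul_right main _
      _ = (ENNReal.ofReal (A^s) * (c2 * cC)) * IF
          + (ENNReal.ofReal (A^s) * c2 * ENNReal.ofReal (B^(-s))) * IG := by ring
  -- the small coefficient
  have hcoef : ENNReal.ofReal (A^s) * (c2 * cC) ≤ ENNReal.ofReal (1/2) := by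
    have hc2' : c2 = ENNReal.ofReal ((2:ℝ)^r) := by
      rw [hc2_def, ← ENNReal.ofReal_rpow_of_pos two_pos, ENNReal.ofReal_ofNat]
    have hcC' : cC = ENNReal.ofReal ((C₁*ε)^r) := by
      rw [hcC_def, ENNReal.ofReal_rpow_of_pos (by positivity)]
    rw [hc2', hcC', ← ENNReal.ofReal_mul (by positivity),
      ← ENNReal.ofReal_mul (Real.rpow_nonneg hApos.le _)]
    refine ENNReal.ofReal_le_ofReal ?_
    have hAs : A^s = ε^((α/(n:ℝ) - 1/γ)*s) := by
      rw [hA_def, ← Real.rpow_mul hε.le]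
    have hCer : (C₁*ε)^r = C₁^r * ε^r := Real.mul_rpow hC₁.le hε.le
    have hexp : (α/(n:ℝ) - 1/γ)*s + r = p := by
      rw [hp_def, he_def]; ring
    calc A^s * ((2:ℝ)^r * (C₁*ε)^r)
        = (2:ℝ)^r * C₁^r * (ε^((α/(n:ℝ) - 1/γ)*s) * ε^r) := by rw [hAs, hCer]; ring
      _ = (2:ℝ)^r * C₁^r * ε^p := by rw [← Real.rpow_add hε, hexp]
      _ ≤ (2:ℝ)^r * C₁^r * T := by
          have := mul_le_mul_of_nonneg_left hεT (le_of_lt (mul_pos h2r hC1r))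
          linarith
      _ = 1/2 := by rw [hT_def]; field_simp
  obtain ⟨K, hK_def⟩ : ∃ x : ℝ, x = A^s * (2:ℝ)^r * B^(-s) := ⟨_, rfl⟩
  have hKpos : 0 < K := by
    rw [hK_def]
    exact mul_pos (mul_pos (Real.rpow_pos_of_pos hApos _) h2r) (Real.rpow_pos_of_pos hBpos _)
  have hcoef2 : ENNReal.ofReal (A^s) * c2 * ENNReal.ofReal (B^(-s)) = ENNReal.ofReal K := by
    have hc2' : c2 = ENNReal.ofReal ((2:ℝ)^r) := by
      rw [hc2_def, ← ENNReal.ofReal_rpow_of_pos two_pos, ENNReal.ofReal_ofNat]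
    rw [hc2', ← ENNReal.ofReal_mul (Real.rpow_nonneg hApos.le _),
      ← ENNReal.ofReal_mul (by positivity), hK_def]
  have main3 : IF ≤ ENNReal.ofReal (1/2) * IF + ENNReal.ofReal K * IG :=
    le_trans main2 (add_le_add (mul_le_mul_left hcoef IF) (le_of_eq (by rw [hcoef2])))
  -- conclusion
  refine ⟨(2*K)^(1/s), Real.rpow_pos_of_pos (by linarith) _, fun hfin => ?_⟩
  have hqIF : ENNReal.ofReal q * IF ≠ ⊤ := by
    intro h
    apply hfin
    rw [hLF, h, ENNReal.top_rpow_of_pos (by positivity)]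
  have hIFne : IF ≠ ⊤ := by
    intro h
    apply hqIF
    rw [h, ENNReal.mul_top (by simp [ENNReal.ofReal_eq_zero, hq.not_ge])]
  have h2half : (2:ℝ≥0∞) * ENNReal.ofReal (1/2) = 1 := by
    rw [← ENNReal.ofReal_ofNat 2, ← ENNReal.ofReal_mul (by norm_num)]
    norm_num
  have habsorb : IF ≤ ENNReal.ofReal (2*K) * IG := by
    have h2IF : IF + IF ≤ IF + ENNReal.ofReal (2*K) * IG := by
      calc IF + IF = 2 * IF := (two_mul IF).symm
        _ ≤ 2 * (ENNReal.ofReal (1/2) * IF + ENNReal.ofReal K * IG) :=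
            mul_le_mul_right main3 2
        _ = (2 * ENNReal.ofReal (1/2)) * IF + (2 * ENNReal.ofReal K) * IG := by ring
        _ = IF + ENNReal.ofReal (2*K) * IG := by
            rw [h2half, one_mul, ENNReal.ofReal_mul (by norm_num), ENNReal.ofReal_ofNat]
    exact (ENNReal.add_le_add_iff_left hIFne).1 h2IF
  rw [hLF, hLG]
  calc (ENNReal.ofReal q * IF) ^ (1/s)
      ≤ (ENNReal.ofReal (2*K) * (ENNReal.ofReal q * IG)) ^ (1/s) := by
        refine ENNReal.rpow_le_rpow ?_ (by positivity)
        calc ENNReal.ofReal q * IF ≤ ENNReal.ofReal q * (ENNReal.ofReal (2*K) * IG) :=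
              mul_le_mul_right habsorb _
          _ = ENNReal.ofReal (2*K) * (ENNReal.ofReal q * IG) := by ring
    _ = ENNReal.ofReal (2*K) ^ (1/s) * (ENNReal.ofReal q * IG) ^ (1/s) :=
        ENNReal.mul_rpow_of_nonneg _ _ (by positivity)
    _ = ENNReal.ofReal ((2*K)^(1/s)) * (ENNReal.ofReal q * IG) ^ (1/s) := by
        rw [ENNReal.ofReal_rpow_of_pos (by linarith)]
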